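/- Let p₀ ∈ (0,1) and let π₀ be a Borel probability measure on [0,1] such that π₀({p : |p − p₀| < ε}) > 0 for every ε > 0. For each N ∈ ℕ let n_N, m_N, r_N be natural numbers with n_N + m_N + r_N = N and let ρ_{N,1},…,ρ_{N,r_N} ∈ [0,1]; define the survival likelihood L_N(p) = p^{n_N} (1−p)^{m_N} ∏_{i=1}^{r_N} (1 − ρ_{N,i} p) for p ∈ [0,1]. If n_N/N → p₀ and r_N/N → 0 as N → ∞, then for every ε > 0, ( ∫_{{p : |p−p₀|<ε}} L_N dπ₀ ) / ( ∫_{[0,1]} L_N dπ₀ ) → 1 as N → ∞. -/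

import Mathlib

open MeasureTheory Filter

/-- For `0 < θ ≤ p ≤ 1`, `p ^ e ≤ θ ^ (-|e|)`. -/
private lemma aux_rpow_theta {θ p e : ℝ} (hθ0 : 0 < θ) (hθ1 : θ ≤ 1)
    (hpθ : θ ≤ p) (hp1 : p ≤ 1) : p ^ e ≤ θ ^ (-|e|) := by
  have hp0 : 0 < p := lt_of_lt_of_le hθ0 hpθ
  rcases le_or_gt 0 e with he | he
  · have h1 : p ^ e ≤ 1 := Real.rpow_le_one hp0.le hp1 he
    have h2 : (1:ℝ) ≤ θ ^ (-|e|) :=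
      Real.one_le_rpow_of_pos_of_le_one_of_nonpos hθ0 hθ1 (neg_nonpos.mpr (abs_nonneg e))
    linarith
  · have habs : -|e| = e := by rw [abs_of_neg he]; ring
    rw [habs]
    exact Real.rpow_le_rpow_of_nonpos hθ0 hpθ he.le

/-- `(x ^ (k/N)) ^ N = x ^ k` for `x ≥ 0`, `N ≠ 0`. -/
private lemma aux_pow_split {x : ℝ} (hx : 0 ≤ x) {k N : ℕ} (hN : N ≠ 0) :
    (x ^ ((k : ℝ) / (N : ℝ))) ^ N = x ^ k := by
  have hN' : (N : ℝ) ≠ 0 := Nat.cast_ne_zero.mpr hN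
  rw [← Real.rpow_natCast (x ^ ((k : ℝ) / (N : ℝ))) N, ← Real.rpow_mul hx,
    div_mul_cancel₀ _ hN', Real.rpow_natCast]

/-- Strict entropy inequality: for `q ∈ [0,1]`, `q ≠ p₀`,
`q ^ p₀ (1-q) ^ (1-p₀) < p₀ ^ p₀ (1-p₀) ^ (1-p₀)`. -/
private lemma aux_entropy {p₀ q : ℝ} (h0 : 0 < p₀) (h1 : p₀ < 1)
    (hq0 : 0 ≤ q) (hq1 : q ≤ 1) (hne : q ≠ p₀) :
    q ^ p₀ * (1 - q) ^ (1 - p₀) < p₀ ^ p₀ * (1 - p₀) ^ (1 - p₀) := by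
  have h1' : 0 < 1 - p₀ := by linarith
  have hM : 0 < p₀ ^ p₀ * (1 - p₀) ^ (1 - p₀) :=
    mul_pos (Real.rpow_pos_of_pos h0 _) (Real.rpow_pos_of_pos h1' _)
  rcases eq_or_lt_of_le hq0 with h | hq0'
  · rw [← h, Real.zero_rpow h0.ne', zero_mul]; exact hM
  rcases eq_or_lt_of_le hq1 with h | hq1'
  · rw [h]; simp only [sub_self, Real.zero_rpow h1'.ne', mul_zero]; exact hM
  -- now 0 < q < 1
  have h1q : 0 < 1 - q := by linarith
  have hxy : q / p₀ ≠ (1 - q) / (1 - p₀) := by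
    intro h
    apply hne
    field_simp at h
    nlinarith
  have hs := strictConcaveOn_log_Ioi.2 (Set.mem_Ioi.mpr (div_pos hq0' h0))
    (Set.mem_Ioi.mpr (div_pos h1q h1')) hxy h0 h1' (by ring)
  have hcomb : p₀ • (q / p₀) + (1 - p₀) • ((1 - q) / (1 - p₀)) = 1 := by
    rw [smul_eq_mul, smul_eq_mul, mul_div_assoc', mul_div_assoc', mul_comm p₀ q,
      mul_comm (1 - p₀) (1 - q), mul_div_assoc, mul_div_assoc, div_self h0.ne', div_self h1'.ne']
    ring
  rw [hcomb, smul_eq_mul, smul_eq_mul, Real.log_one,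
    Real.log_div hq0'.ne' h0.ne', Real.log_div h1q.ne' h1'.ne'] at hs
  have key : p₀ * Real.log q + (1 - p₀) * Real.log (1 - q) <
      p₀ * Real.log p₀ + (1 - p₀) * Real.log (1 - p₀) := by nlinarith
  rw [Real.rpow_def_of_pos hq0', Real.rpow_def_of_pos h1q,
    Real.rpow_def_of_pos h0, Real.rpow_def_of_pos h1',
    ← Real.exp_add, ← Real.exp_add]
  exact Real.exp_lt_exp.mpr (by nlinarith [key])

set_option maxHeartbeats 1000000 in
/-- Deterministic core of Lemma 5.1(1): posterior consistency of the toxicity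
probability under the survival likelihood when the fraction of pending outcomes
vanishes. -/
theorem stmt_5 (p₀ : ℝ) (hp₀ : p₀ ∈ Set.Ioo (0:ℝ) 1)
    (π₀ : Measure ℝ) [IsProbabilityMeasure π₀]
    (hπ₀_supp : π₀ (Set.Icc (0:ℝ) 1)ᶜ = 0)
    (hπ₀_pos : ∀ ε > 0, 0 < π₀ {p : ℝ | |p - p₀| < ε})
    (n m r : ℕ → ℕ) (hsum : ∀ N, n N + m N + r N = N)
    (ρ : (N : ℕ) → Fin (r N) → ℝ) (hρ : ∀ N i, ρ N i ∈ Set.Icc (0:ℝ) 1)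
    (L : ℕ → ℝ → ℝ)
    (hL : ∀ N p, L N p = p ^ n N * (1 - p) ^ m N * ∏ i, (1 - ρ N i * p))
    (hn : Tendsto (fun N => (n N : ℝ) / N) atTop (nhds p₀))
    (hr : Tendsto (fun N => (r N : ℝ) / N) atTop (nhds 0)) :
    ∀ ε > 0, Tendsto (fun N =>
        (∫ p in {p : ℝ | |p - p₀| < ε}, L N p ∂π₀) /
          (∫ p in Set.Icc (0:ℝ) 1, L N p ∂π₀))
      atTop (nhds 1) := by
  obtain ⟨hp0, hp1⟩ := hp₀
  have hp1' : 0 < 1 - p₀ := by linarith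
  intro ε hε
  set A : Set ℝ := {p : ℝ | |p - p₀| < ε} with hAdef
  have hAopen : IsOpen A := by
    have : Continuous fun p : ℝ => |p - p₀| := (continuous_id.sub continuous_const).abs
    exact isOpen_lt this continuous_const
  set C : Set ℝ := Set.Icc (0:ℝ) 1 \ A with hCdef
  have hCm : MeasurableSet C := measurableSet_Icc.diff hAopen.measurableSet
  -- basic pointwise bounds for L
  have hL0 : ∀ N, ∀ p ∈ Set.Icc (0:ℝ) 1, 0 ≤ L N p := by
    intro N p hp
    rw [hL]
    have h1 : (0:ℝ) ≤ p ^ n N := pow_nonneg hp.1 _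
    have h2 : (0:ℝ) ≤ (1 - p) ^ m N := pow_nonneg (by linarith [hp.2]) _
    have h3 : (0:ℝ) ≤ ∏ i, (1 - ρ N i * p) := by
      apply Finset.prod_nonneg
      intro i _
      have := (hρ N i).2
      have := (hρ N i).1
      nlinarith [hp.2, hp.1]
    positivity
  have hLup : ∀ N, ∀ p ∈ Set.Icc (0:ℝ) 1, L N p ≤ p ^ n N * (1 - p) ^ m N := by
    intro N p hp
    rw [hL]
    have h1 : (0:ℝ) ≤ p ^ n N * (1 - p) ^ m N :=
      mul_nonneg (pow_nonneg hp.1 _) (pow_nonneg (by linarith [hp.2]) _)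
    have h3 : (∏ i, (1 - ρ N i * p)) ≤ 1 := by
      apply Finset.prod_le_one
      · intro i _
        have := (hρ N i).2
        have := (hρ N i).1
        nlinarith [hp.2, hp.1]
      · intro i _
        have := (hρ N i).1
        nlinarith [hp.1]
    nlinarith
  have hLlow : ∀ N, ∀ p ∈ Set.Icc (0:ℝ) 1,
      p ^ n N * (1 - p) ^ (m N + r N) ≤ L N p := by
    intro N p hp
    rw [hL, pow_add]
    have h1 : (0:ℝ) ≤ p ^ n N := pow_nonneg hp.1 _
    have h2 : (0:ℝ) ≤ (1 - p) ^ m N := pow_nonneg (by linarith [hp.2]) _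
    have h3 : (1 - p) ^ r N ≤ ∏ i, (1 - ρ N i * p) := by
      have : (1 - p) ^ r N = ∏ _i : Fin (r N), (1 - p) := by
        rw [Finset.prod_const, Finset.card_univ, Fintype.card_fin]
      rw [this]
      apply Finset.prod_le_prod
      · intro i _; linarith [hp.2]
      · intro i _
        have := (hρ N i).2
        nlinarith [hp.1]
    calc p ^ n N * ((1 - p) ^ m N * (1 - p) ^ r N)
        = p ^ n N * (1 - p) ^ m N * (1 - p) ^ r N := by ring
      _ ≤ p ^ n N * (1 - p) ^ m N * ∏ i, (1 - ρ N i * p) := by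
          apply mul_le_mul_of_nonneg_left h3 (mul_nonneg h1 h2)
  -- continuity and integrability of L N
  have hLc : ∀ N, Continuous (L N) := by
    intro N
    have : L N = fun p => p ^ n N * (1 - p) ^ m N * ∏ i, (1 - ρ N i * p) :=
      funext (hL N)
    rw [this]
    apply Continuous.mul
    · exact (continuous_pow _).mul ((continuous_const.sub continuous_id).pow _)
    · exact continuous_finset_prod _ fun i _ =>
        continuous_const.sub (continuous_const.mul continuous_id)
  have hae : ∀ᵐ p ∂π₀, p ∈ Set.Icc (0:ℝ) 1 := by
    rw [ae_iff]
    convert hπ₀_supp using 2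
    rfl
  have hLint : ∀ N, Integrable (L N) π₀ := by
    intro N
    apply Integrable.mono' (integrable_const (1:ℝ)) (hLc N).aestronglyMeasurable
    filter_upwards [hae] with p hp
    rw [Real.norm_eq_abs, abs_of_nonneg (hL0 N p hp)]
    calc L N p ≤ p ^ n N * (1 - p) ^ m N := hLup N p hp
      _ ≤ 1 * 1 := by
          apply mul_le_mul _ _ (pow_nonneg (by linarith [hp.2]) _) zero_le_one
          · exact pow_le_one₀ hp.1 hp.2
          · exact pow_le_one₀ (by linarith [hp.2]) (by linarith [hp.1])
      _ = 1 := one_mul 1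
  -- limits of m/N and (m+r)/N
  have hm' : Tendsto (fun N => (m N : ℝ) / N) atTop (nhds (1 - p₀)) := by
    have hcongr : ∀ᶠ N in atTop, (1:ℝ) - (n N : ℝ) / N - (r N : ℝ) / N = (m N : ℝ) / N := by
      filter_upwards [eventually_ge_atTop 1] with N hN
      have hN0 : (N:ℝ) ≠ 0 := Nat.cast_ne_zero.mpr (by omega)
      have hs : (n N : ℝ) + m N + r N = N := by exact_mod_cast congrArg (Nat.cast : ℕ → ℝ) (hsum N)
      field_simp
      linarith
    have : Tendsto (fun N => (1:ℝ) - (n N : ℝ) / N - (r N : ℝ) / N) atTop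
        (nhds (1 - p₀ - 0)) := (tendsto_const_nhds.sub hn).sub hr
    rw [sub_zero] at this
    exact Tendsto.congr' hcongr this
  have hmr : Tendsto (fun N => ((m N : ℝ) + r N) / N) atTop (nhds (1 - p₀)) := by
    have : Tendsto (fun N => (m N : ℝ) / N + (r N : ℝ) / N) atTop (nhds (1 - p₀ + 0)) :=
      hm'.add hr
    rw [add_zero] at this
    exact this.congr fun N => by rw [add_div]
  have hγ : Tendsto (fun N => |(n N : ℝ) / N - p₀| + |(m N : ℝ) / N - (1 - p₀)|) atTop
      (nhds 0) := by
    have h1 : Tendsto (fun N => |(n N : ℝ) / N - p₀|) atTop (nhds 0) := by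
      have := (hn.sub (tendsto_const_nhds (x := p₀))).abs
      simpa using this
    have h2 : Tendsto (fun N => |(m N : ℝ) / N - (1 - p₀)|) atTop (nhds 0) := by
      have := (hm'.sub (tendsto_const_nhds (x := 1 - p₀))).abs
      simpa using this
    have := h1.add h2
    simpa using this
  -- the entropy maximum M and the sup c of the entropy function over C
  set M : ℝ := p₀ ^ p₀ * (1 - p₀) ^ (1 - p₀) with hMdef
  have hM : 0 < M := mul_pos (Real.rpow_pos_of_pos hp0 _) (Real.rpow_pos_of_pos hp1' _)
  obtain ⟨c, hc0, hcM, hch⟩ : ∃ c, 0 ≤ c ∧ c < M ∧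
      ∀ p ∈ C, p ^ p₀ * (1 - p) ^ (1 - p₀) ≤ c := by
    rcases C.eq_empty_or_nonempty with hCE | hCE
    · exact ⟨0, le_refl 0, hM, by simp [hCE]⟩
    · have hCc : IsCompact C := isCompact_Icc.diff hAopen
      have hcont : ContinuousOn (fun p : ℝ => p ^ p₀ * (1 - p) ^ (1 - p₀)) C := by
        intro p _
        apply ContinuousAt.continuousWithinAt
        exact (Real.continuousAt_rpow_const p p₀ (Or.inr hp0.le)).mul
          ((Real.continuousAt_rpow_const (1 - p) (1 - p₀) (Or.inr hp1'.le)).comp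
            ((continuous_const.sub continuous_id).continuousAt))
      obtain ⟨q, hqC, hq⟩ := hCc.exists_isMaxOn hCE hcont
      refine ⟨q ^ p₀ * (1 - q) ^ (1 - p₀), ?_, ?_, fun p hp => hq hp⟩
      · exact mul_nonneg (Real.rpow_nonneg hqC.1.1 _)
          (Real.rpow_nonneg (by linarith [hqC.1.2]) _)
      · apply aux_entropy hp0 hp1 hqC.1.1 hqC.1.2
        intro h
        have : q ∈ A := by rw [hAdef]; simp [h, hε]
        exact hqC.2 this
  -- choice of θ
  set θ : ℝ := min (min (1/2) (M/2)) (min ((M/2) ^ (2/p₀)) ((M/2) ^ (2/(1 - p₀)))) with hθdef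
  have hM2 : 0 < M / 2 := by linarith
  have hθ0 : 0 < θ := by
    apply lt_min (lt_min (by norm_num) hM2)
    exact lt_min (Real.rpow_pos_of_pos hM2 _) (Real.rpow_pos_of_pos hM2 _)
  have hθhalf : θ ≤ 1/2 := le_trans (min_le_left _ _) (min_le_left _ _)
  have hθ1 : θ ≤ 1 := hθhalf.trans (by norm_num)
  have hθM : θ < M := lt_of_le_of_lt (le_trans (min_le_left _ _) (min_le_right _ _)) (by linarith)
  have hθa : θ ^ (p₀/2) ≤ M/2 := by
    have h1 : θ ≤ (M/2) ^ (2/p₀) := le_trans (min_le_right _ _) (min_le_left _ _)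
    calc θ ^ (p₀/2) ≤ ((M/2) ^ (2/p₀)) ^ (p₀/2) :=
          Real.rpow_le_rpow hθ0.le h1 (by positivity)
      _ = (M/2) ^ ((2/p₀) * (p₀/2)) := (Real.rpow_mul hM2.le _ _).symm
      _ = M/2 := by rw [div_mul_div_comm, mul_comm]; rw [div_self (by positivity), Real.rpow_one]
  have hθb : θ ^ ((1 - p₀)/2) ≤ M/2 := by
    have h1 : θ ≤ (M/2) ^ (2/(1 - p₀)) := le_trans (min_le_right _ _) (min_le_right _ _)
    calc θ ^ ((1 - p₀)/2) ≤ ((M/2) ^ (2/(1 - p₀))) ^ ((1 - p₀)/2) :=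
          Real.rpow_le_rpow hθ0.le h1 (by positivity)
      _ = (M/2) ^ ((2/(1 - p₀)) * ((1 - p₀)/2)) := (Real.rpow_mul hM2.le _ _).symm
      _ = M/2 := by rw [div_mul_div_comm, mul_comm]; rw [div_self (by positivity), Real.rpow_one]
  -- c* and v
  set cs : ℝ := max c θ with hcsdef
  have hcs0 : 0 < cs := lt_of_lt_of_le hθ0 (le_max_right _ _)
  have hcsM : cs < M := max_lt hcM hθM
  set v : ℝ := (cs + M)/2 with hvdef
  have hv1 : cs < v := by rw [hvdef]; linarith
  have hv2 : v < M := by rw [hvdef]; linarith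
  have hv0 : 0 < v := lt_trans hcs0 hv1
  have hvM2 : M/2 ≤ v := by rw [hvdef]; linarith [hcs0]
  -- choice of δ
  obtain ⟨δ, hδv, hδlt, hδ0⟩ : ∃ δ : ℝ,
      v < (p₀ - δ) ^ p₀ * (1 - p₀ - δ) ^ (1 - p₀) ∧
      δ < min (min ε p₀) (1 - p₀) ∧ δ ∈ Set.Ioi (0:ℝ) := by
    have hcont : Tendsto (fun d : ℝ => (p₀ - d) ^ p₀ * (1 - p₀ - d) ^ (1 - p₀))
        (nhds 0) (nhds M) := by
      have h1 : Tendsto (fun d : ℝ => p₀ - d) (nhds 0) (nhds p₀) := by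
        have := (tendsto_const_nhds (x := p₀) (f := nhds (0:ℝ))).sub tendsto_id
        simpa using this
      have h2 : Tendsto (fun d : ℝ => 1 - p₀ - d) (nhds 0) (nhds (1 - p₀)) := by
        have := (tendsto_const_nhds (x := 1 - p₀) (f := nhds (0:ℝ))).sub tendsto_id
        simpa using this
      exact (h1.rpow tendsto_const_nhds (Or.inl hp0.ne')).mul
        (h2.rpow tendsto_const_nhds (Or.inl hp1'.ne'))
    have h1 : ∀ᶠ d in nhdsWithin (0:ℝ) (Set.Ioi 0),
        v < (p₀ - d) ^ p₀ * (1 - p₀ - d) ^ (1 - p₀) :=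
      ((hcont.mono_left nhdsWithin_le_nhds).eventually (eventually_gt_nhds hv2))
    have h2 : ∀ᶠ d in nhdsWithin (0:ℝ) (Set.Ioi 0), d < min (min ε p₀) (1 - p₀) :=
      (eventually_lt_nhds (by positivity : (0:ℝ) < min (min ε p₀) (1 - p₀))).filter_mono
        nhdsWithin_le_nhds
    have h3 : ∀ᶠ d in nhdsWithin (0:ℝ) (Set.Ioi 0), d ∈ Set.Ioi (0:ℝ) :=
      self_mem_nhdsWithin
    exact ((h1.and (h2.and h3)).exists).imp fun d hd => ⟨hd.1, hd.2.1, hd.2.2⟩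
  rw [Set.mem_Ioi] at hδ0
  have hδε : δ < ε := lt_of_lt_of_le hδlt (le_trans (min_le_left _ _) (min_le_left _ _))
  have hδp : δ < p₀ := lt_of_lt_of_le hδlt (le_trans (min_le_left _ _) (min_le_right _ _))
  have hδp' : δ < 1 - p₀ := lt_of_lt_of_le hδlt (min_le_right _ _)
  set a : ℝ := p₀ - δ with hadef
  set b : ℝ := 1 - p₀ - δ with hbdef
  have ha : 0 < a := by rw [hadef]; linarith
  have hb : 0 < b := by rw [hbdef]; linarith
  set D : ℝ := a ^ p₀ * b ^ (1 - p₀) with hDdef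
  have hvD : v < D := hδv
  set w : ℝ := (v + D)/2 with hwdef
  have hvw : v < w := by rw [hwdef]; linarith
  have hwD : w < D := by rw [hwdef]; linarith
  have hw0 : 0 < w := lt_trans hv0 hvw
  -- the small ball B
  set B : Set ℝ := {p : ℝ | |p - p₀| < δ} with hBdef
  have hBopen : IsOpen B := by
    have : Continuous fun p : ℝ => |p - p₀| := (continuous_id.sub continuous_const).abs
    exact isOpen_lt this continuous_const
  have hBm : MeasurableSet B := hBopen.measurableSet
  have hBIcc : B ⊆ Set.Icc (0:ℝ) 1 := by
    intro p hp
    rw [hBdef, Set.mem_setOf_eq, abs_lt] at hp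
    constructor <;> [linarith [hp.1]; linarith [hp.2]]
  have hBpos : 0 < (π₀ B).toReal :=
    ENNReal.toReal_pos (hπ₀_pos δ hδ0).ne' (measure_ne_top π₀ B)
  -- MAIN EVENTUAL BOUND 1 : on C, L N ≤ v ^ N
  have hev1 : ∀ᶠ N in atTop, ∀ p ∈ C, L N p ≤ v ^ N := by
    have e1 : ∀ᶠ N in atTop, p₀/2 ≤ (n N : ℝ)/N :=
      hn.eventually (eventually_ge_nhds (by linarith : p₀/2 < p₀))
    have e2 : ∀ᶠ N in atTop, (1 - p₀)/2 ≤ (m N : ℝ)/N :=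
      hm'.eventually (eventually_ge_nhds (by linarith : (1 - p₀)/2 < 1 - p₀))
    have e3 : ∀ᶠ N in atTop,
        θ ^ (-(|(n N : ℝ)/N - p₀| + |(m N : ℝ)/N - (1 - p₀)|)) ≤ v / cs := by
      have ht : Tendsto
          (fun N => θ ^ (-(|(n N : ℝ)/N - p₀| + |(m N : ℝ)/N - (1 - p₀)|))) atTop
          (nhds (θ ^ (-(0:ℝ)))) :=
        Filter.Tendsto.rpow tendsto_const_nhds hγ.neg (Or.inl hθ0.ne')
      have h1 : θ ^ (-(0:ℝ)) = 1 := by norm_num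
      rw [h1] at ht
      exact ht.eventually (eventually_le_nhds ((one_lt_div hcs0).mpr hv1))
    filter_upwards [eventually_ge_atTop 1, e1, e2, e3] with N hN1 h1 h2 h3
    intro p hp
    obtain ⟨hpIcc, hpA⟩ := hp
    have hp0' : (0:ℝ) ≤ p := hpIcc.1
    have hp1'' : p ≤ 1 := hpIcc.2
    have hNne : N ≠ 0 := by omega
    have hNpos : (0:ℝ) < N := by exact_mod_cast Nat.pos_of_ne_zero hNne
    refine le_trans (hLup N p hpIcc) ?_
    rcases le_or_gt p θ with hpθ | hpθ
    · -- left tail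
      calc p ^ n N * (1 - p) ^ m N ≤ θ ^ n N * 1 := by
            apply mul_le_mul (pow_le_pow_left₀ hp0' hpθ _)
              (pow_le_one₀ (by linarith) (by linarith))
              (pow_nonneg (by linarith) _) (pow_nonneg hθ0.le _)
        _ = θ ^ n N := mul_one _
        _ = θ ^ ((n N : ℝ)) := (Real.rpow_natCast θ (n N)).symm
        _ ≤ θ ^ ((p₀/2) * N) := by
            exact Real.rpow_le_rpow_of_exponent_ge hθ0 hθ1 ((le_div_iff₀ hNpos).mp h1)
        _ = (θ ^ (p₀/2)) ^ ((N:ℝ)) := by rw [← Real.rpow_mul hθ0.le]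
        _ = (θ ^ (p₀/2)) ^ N := Real.rpow_natCast _ N
        _ ≤ v ^ N := pow_le_pow_left₀ (Real.rpow_nonneg hθ0.le _) (hθa.trans hvM2) N
    rcases le_or_gt (1 - θ) p with hpθ' | hpθ'
    · -- right tail
      have h1p : 1 - p ≤ θ := by linarith
      calc p ^ n N * (1 - p) ^ m N ≤ 1 * θ ^ m N := by
            apply mul_le_mul (pow_le_one₀ hp0' hp1'')
              (pow_le_pow_left₀ (by linarith) h1p _)
              (pow_nonneg (by linarith) _) zero_le_one
        _ = θ ^ m N := one_mul _
        _ = θ ^ ((m N : ℝ)) := (Real.rpow_natCast θ (m N)).symm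
        _ ≤ θ ^ (((1 - p₀)/2) * N) := by
            exact Real.rpow_le_rpow_of_exponent_ge hθ0 hθ1 ((le_div_iff₀ hNpos).mp h2)
        _ = (θ ^ ((1 - p₀)/2)) ^ ((N:ℝ)) := by rw [← Real.rpow_mul hθ0.le]
        _ = (θ ^ ((1 - p₀)/2)) ^ N := Real.rpow_natCast _ N
        _ ≤ v ^ N := pow_le_pow_left₀ (Real.rpow_nonneg hθ0.le _) (hθb.trans hvM2) N
    · -- middle
      have hpθle : θ ≤ p := hpθ.le
      have hp0'' : 0 < p := lt_of_lt_of_le hθ0 hpθle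
      have h1pθ : θ ≤ 1 - p := by linarith
      have h1p0 : 0 < 1 - p := lt_of_lt_of_le hθ0 h1pθ
      set α : ℝ := (n N : ℝ)/N with hα
      set β : ℝ := (m N : ℝ)/N with hβ
      have hsplit : p ^ n N * (1 - p) ^ m N = (p ^ α * (1 - p) ^ β) ^ N := by
        rw [mul_pow, aux_pow_split hp0' hNne, aux_pow_split (by linarith : (0:ℝ) ≤ 1 - p) hNne]
      rw [hsplit]
      apply pow_le_pow_left₀ (mul_nonneg (Real.rpow_nonneg hp0' _)
        (Real.rpow_nonneg (by linarith) _))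
      -- show p ^ α * (1 - p) ^ β ≤ v
      have hpa : p ^ α ≤ p ^ p₀ * θ ^ (-|α - p₀|) := by
        have : p ^ α = p ^ p₀ * p ^ (α - p₀) := by
          rw [← Real.rpow_add hp0'']; ring_nf
        rw [this]
        exact mul_le_mul_of_nonneg_left (aux_rpow_theta hθ0 hθ1 hpθle hp1'')
          (Real.rpow_nonneg hp0' _)
      have hpb : (1 - p) ^ β ≤ (1 - p) ^ (1 - p₀) * θ ^ (-|β - (1 - p₀)|) := by
        have : (1 - p) ^ β = (1 - p) ^ (1 - p₀) * (1 - p) ^ (β - (1 - p₀)) := by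
          rw [← Real.rpow_add h1p0]; ring_nf
        rw [this]
        exact mul_le_mul_of_nonneg_left
          (aux_rpow_theta hθ0 hθ1 h1pθ (by linarith)) (Real.rpow_nonneg (by linarith) _)
      calc p ^ α * (1 - p) ^ β
          ≤ (p ^ p₀ * θ ^ (-|α - p₀|)) * ((1 - p) ^ (1 - p₀) * θ ^ (-|β - (1 - p₀)|)) := by
            apply mul_le_mul hpa hpb (Real.rpow_nonneg (by linarith) _)
            exact mul_nonneg (Real.rpow_nonneg hp0' _) (Real.rpow_nonneg hθ0.le _)
        _ = (p ^ p₀ * (1 - p) ^ (1 - p₀)) * (θ ^ (-|α - p₀|) * θ ^ (-|β - (1 - p₀)|)) := by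
            ring
        _ = (p ^ p₀ * (1 - p) ^ (1 - p₀)) * θ ^ (-(|α - p₀| + |β - (1 - p₀)|)) := by
            rw [← Real.rpow_add hθ0, neg_add]
        _ ≤ cs * (v / cs) := by
            apply mul_le_mul _ h3 (Real.rpow_nonneg hθ0.le _) hcs0.le
            exact le_trans (hch p ⟨hpIcc, hpA⟩) (le_max_left _ _)
        _ = v := by field_simp
  -- MAIN EVENTUAL BOUND 2 : on B, w^N ≤ L N
  have hev2 : ∀ᶠ N in atTop, ∀ p ∈ B, w ^ N ≤ L N p := by
    have e4 : ∀ᶠ N in atTop, w ≤ a ^ ((n N : ℝ)/N) * b ^ (((m N : ℝ) + r N)/N) := by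
      have ht : Tendsto (fun N => a ^ ((n N : ℝ)/N) * b ^ (((m N : ℝ) + r N)/N)) atTop
          (nhds (a ^ p₀ * b ^ (1 - p₀))) :=
        (Filter.Tendsto.rpow tendsto_const_nhds hn (Or.inl ha.ne')).mul
          (Filter.Tendsto.rpow tendsto_const_nhds hmr (Or.inl hb.ne'))
      exact ht.eventually (eventually_ge_nhds hwD)
    filter_upwards [eventually_ge_atTop 1, e4] with N hN1 h4
    intro p hp
    rw [hBdef, Set.mem_setOf_eq, abs_lt] at hp
    have hpIcc : p ∈ Set.Icc (0:ℝ) 1 := ⟨by linarith [hp.1], by linarith [hp.2]⟩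
    have hap : a ≤ p := by rw [hadef]; linarith [hp.1]
    have hbp : b ≤ 1 - p := by rw [hbdef]; linarith [hp.2]
    have hNne : N ≠ 0 := by omega
    refine le_trans ?_ (hLlow N p hpIcc)
    have hcast : ((m N : ℝ) + r N) = ((m N + r N : ℕ) : ℝ) := by push_cast; ring
    calc w ^ N ≤ (a ^ ((n N : ℝ)/N) * b ^ (((m N : ℝ) + r N)/N)) ^ N :=
          pow_le_pow_left₀ hw0.le h4 N
      _ = a ^ n N * b ^ (m N + r N) := by
          rw [mul_pow, aux_pow_split ha.le hNne, hcast, aux_pow_split hb.le hNne]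
      _ ≤ p ^ n N * (1 - p) ^ (m N + r N) := by
          apply mul_le_mul (pow_le_pow_left₀ ha.le hap _)
            (pow_le_pow_left₀ hb.le hbp _) (pow_nonneg hb.le _) (pow_nonneg hpIcc.1 _)
  -- integral notation
  set J : ℕ → ℝ := fun N => ∫ p in Set.Icc (0:ℝ) 1, L N p ∂π₀ with hJdef
  set K : ℕ → ℝ := fun N => ∫ p in C, L N p ∂π₀ with hKdef
  have hK0 : ∀ N, 0 ≤ K N := by
    intro N
    apply setIntegral_nonneg hCm
    intro p hp
    exact hL0 N p hp.1
  have hKle : ∀ᶠ N in atTop, K N ≤ v ^ N := by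
    filter_upwards [hev1] with N hN
    calc K N ≤ ∫ _p in C, v ^ N ∂π₀ := by
          apply setIntegral_mono_on ((hLint N).integrableOn) (integrableOn_const
            (measure_ne_top π₀ C)) hCm hN
      _ = (π₀ C).toReal • v ^ N := setIntegral_const _
      _ ≤ 1 * v ^ N := by
          rw [smul_eq_mul]
          apply mul_le_mul_of_nonneg_right _ (pow_nonneg hv0.le _)
          exact ENNReal.toReal_le_of_le_ofReal zero_le_one (by simpa using prob_le_one)
      _ = v ^ N := one_mul _
  have hJB : ∀ᶠ N in atTop, w ^ N * (π₀ B).toReal ≤ J N := by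
    filter_upwards [hev2] with N hN
    have step1 : w ^ N * (π₀ B).toReal ≤ ∫ p in B, L N p ∂π₀ :=
      by have := setIntegral_ge_of_const_le_real hBm (measure_ne_top π₀ B) hN ((hLint N).integrableOn)
         exact this
    refine step1.trans ?_
    apply setIntegral_mono_set ((hLint N).integrableOn)
    · filter_upwards [ae_restrict_mem measurableSet_Icc] with p hp
      exact hL0 N p hp
    · exact HasSubset.Subset.eventuallyLE hBIcc
  have hJpos : ∀ᶠ N in atTop, 0 < J N := by
    filter_upwards [hJB] with N hN
    exact lt_of_lt_of_le (mul_pos (pow_pos hw0 N) hBpos) hN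
  -- splitting the integral
  have hsplit : ∀ N, (∫ p in A, L N p ∂π₀) = J N - K N := by
    intro N
    have hdisj : Disjoint (Set.Icc (0:ℝ) 1 ∩ A) C :=
      Set.disjoint_left.mpr fun p h1 h2 => h2.2 h1.2
    have hIccsplit : J N = (∫ p in Set.Icc (0:ℝ) 1 ∩ A, L N p ∂π₀) + K N := by
      have hun : Set.Icc (0:ℝ) 1 ∩ A ∪ C = Set.Icc (0:ℝ) 1 := Set.inter_union_diff _ _
      have h := setIntegral_union (f := L N) (μ := π₀) hdisj hCm
        ((hLint N).integrableOn) ((hLint N).integrableOn)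
      rw [hun] at h
      exact h
    have haeq : (A : Set ℝ) =ᵐ[π₀] ((Set.Icc (0:ℝ) 1 ∩ A : Set ℝ) : Set ℝ) := by
      rw [ae_eq_set]
      constructor
      · exact measure_mono_null (fun p hp hIcc => hp.2 ⟨hIcc, hp.1⟩) hπ₀_supp
      · rw [Set.diff_eq_empty.mpr Set.inter_subset_right]
        exact measure_empty
    have hA' : (∫ p in A, L N p ∂π₀) = ∫ p in Set.Icc (0:ℝ) 1 ∩ A, L N p ∂π₀ :=
      setIntegral_congr_set haeq
    rw [hA', hIccsplit]
    ring
  -- final limit computation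
  have hKJ : Tendsto (fun N => K N / J N) atTop (nhds 0) := by
    have hupper : ∀ᶠ N in atTop, K N / J N ≤ (π₀ B).toReal⁻¹ * (v/w) ^ N := by
      filter_upwards [hKle, hJB, hJpos] with N h1 h2 h3
      calc K N / J N ≤ v ^ N / (w ^ N * (π₀ B).toReal) :=
            div_le_div₀ (pow_nonneg hv0.le N) h1 (mul_pos (pow_pos hw0 N) hBpos) h2
        _ = (π₀ B).toReal⁻¹ * (v/w) ^ N := by
            have halg : ∀ x y t : ℝ, y ≠ 0 → t ≠ 0 →
                x ^ N / (y ^ N * t) = t⁻¹ * (x/y) ^ N := by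
              intro x y t hy ht
              rw [div_mul_eq_div_div, ← div_pow, div_eq_inv_mul]
            exact halg v w _ hw0.ne' hBpos.ne'
    have hlower : ∀ᶠ N in atTop, 0 ≤ K N / J N := by
      filter_upwards [hJpos] with N h3
      exact div_nonneg (hK0 N) h3.le
    have hgeo : Tendsto (fun N => (π₀ B).toReal⁻¹ * (v/w) ^ N) atTop (nhds 0) := by
      have h := (tendsto_pow_atTop_nhds_zero_of_lt_one (div_nonneg hv0.le hw0.le)
        ((div_lt_one hw0).mpr hvw)).const_mul ((π₀ B).toReal⁻¹)
      simpa using h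
    exact tendsto_of_tendsto_of_tendsto_of_le_of_le' tendsto_const_nhds hgeo hlower hupper
  have heq : ∀ᶠ N in atTop,
      1 - K N / J N = (∫ p in A, L N p ∂π₀) / J N := by
    filter_upwards [hJpos] with N hN
    rw [hsplit N]
    field_simp
  have hfinal : Tendsto (fun N => 1 - K N / J N) atTop (nhds 1) := by
    have := (tendsto_const_nhds (x := (1:ℝ)) (f := atTop)).sub hKJ
    simpa using this
  exact Tendsto.congr' heq hfinal
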